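/- arXiv:2603.20065 — 2 statements merged into one kernel-verified Lean document; each statement's English description precedes it below -/
import Mathlib

section
/- Let a = π/2. For any C > 0 and any y' ∈ [0,1/2], we have ∫_ℝ ∫_0^1 F(x,y) dx dy ≤ C' y' where F(x,y) = C (y'/|z-z'|) e^{-a(x-x')} 1_{|z-z'| ≤ 1} + C y² y' e^{-π|x-x'|} e^{-a(x-x')} 1_{|z-z'| ≥ 1}, z = (x,y), z' = (x',y'), and C' depends only on C. -/
open MeasureTheory

/-- The infinite channel `ℝ × [0,1]` as a subset of `ℝ²`. -/
def channel : Set (ℝ × ℝ) := Set.univ ×ˢ Set.Icc (0:ℝ) 1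

/-- Euclidean norm on `ℝ × ℝ`. -/
noncomputable def enr (z : ℝ × ℝ) : ℝ := Real.sqrt (z.1 ^ 2 + z.2 ^ 2)

lemma enr_nonneg (z : ℝ × ℝ) : 0 ≤ enr z := Real.sqrt_nonneg _

lemma channel_measurable : MeasurableSet channel :=
  MeasurableSet.univ.prod measurableSet_Icc

/-- 1D integrable singular profile. -/
noncomputable def pfun : ℝ → ℝ := (Set.Icc (-1:ℝ) 1).indicator (fun s => |s| ^ (-(1/2) : ℝ))

lemma pfun_nonneg (s : ℝ) : 0 ≤ pfun s :=
  Set.indicator_nonneg (fun t _ => Real.rpow_nonneg (abs_nonneg t) _) s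

theorem pfun_integrable : Integrable pfun := by
  rw [pfun, integrable_indicator_iff measurableSet_Icc]
  have J : IntervalIntegrable (fun s : ℝ => |s| ^ (-(1/2) : ℝ)) volume 0 1 := by
    have h := intervalIntegral.intervalIntegrable_rpow' (a := 0) (b := 1) (r := -(1/2)) (by norm_num)
    rw [intervalIntegrable_iff] at h ⊢
    refine h.congr_fun (fun x hx => ?_) measurableSet_uIoc
    rw [Set.uIoc_of_le (by norm_num : (0:ℝ) ≤ 1)] at hx
    rw [abs_of_pos hx.1]
  have J' : IntervalIntegrable (fun s : ℝ => |s| ^ (-(1/2) : ℝ)) volume (-1) 0 := by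
    have := (IntervalIntegrable.iff_comp_neg (by simp)).1 J
    simpa [abs_neg] using this.symm
  have JJ := J'.trans J
  rw [intervalIntegrable_iff_integrableOn_Icc_of_le (by norm_num : (-1:ℝ) ≤ 1)] at JJ
  exact JJ

theorem exp_abs_integrable : Integrable (fun s : ℝ => Real.exp (-(Real.pi/2) * |s|)) := by
  have hpos : 0 < Real.pi / 2 := by positivity
  have hIoi : IntegrableOn (fun s : ℝ => Real.exp (-(Real.pi/2) * |s|)) (Set.Ioi 0) := by
    refine (exp_neg_integrableOn_Ioi 0 hpos).congr_fun (fun x hx => ?_) measurableSet_Ioi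
    rw [abs_of_pos hx]
  have A : Integrable ((Set.Ioi (0:ℝ)).indicator (fun s => Real.exp (-(Real.pi/2) * |s|))) :=
    (integrable_indicator_iff measurableSet_Ioi).2 hIoi
  have B : Integrable ((Set.Iio (0:ℝ)).indicator (fun s => Real.exp (-(Real.pi/2) * |s|))) := by
    have := A.comp_neg
    refine this.congr (Filter.Eventually.of_forall fun s => ?_)
    by_cases h : s < 0 <;> simp [Set.indicator, h, not_lt.2, abs_neg, lt_neg, neg_pos, not_lt]
  have C0 : Integrable (Set.indicator ({(0:ℝ)} : Set ℝ) (fun s : ℝ => Real.exp (-(Real.pi/2) * |s|))) := by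
    apply (integrable_indicator_iff (measurableSet_singleton 0)).2
    exact (integrableOn_singleton_iff (by simp)).2 (Or.inr (by simp))
  have : (fun s : ℝ => Real.exp (-(Real.pi/2) * |s|)) =
      fun s => (Set.Ioi (0:ℝ)).indicator (fun s => Real.exp (-(Real.pi/2) * |s|)) s
        + (Set.Iio (0:ℝ)).indicator (fun s => Real.exp (-(Real.pi/2) * |s|)) s
        + Set.indicator ({(0:ℝ)} : Set ℝ) (fun s : ℝ => Real.exp (-(Real.pi/2) * |s|)) s := by
    funext s
    rcases lt_trichotomy s 0 with h | h | h
    · simp [Set.indicator, h, not_lt.2 h.le, ne_of_lt h]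
    · subst h; simp
    · simp [Set.indicator, h, not_lt.2 h.le, ne_of_gt h]
  rw [this]
  exact (A.add B).add C0

/-- 1D indicator of `[-1,1]`. -/
noncomputable def rind : ℝ → ℝ := (Set.Icc (-1:ℝ) 1).indicator (fun _ => (1:ℝ))

lemma rind_nonneg (s : ℝ) : 0 ≤ rind s :=
  Set.indicator_nonneg (fun _ _ => zero_le_one) s

lemma rind_integrable : Integrable rind := by
  rw [rind, integrable_indicator_iff measurableSet_Icc]
  exact integrableOn_const (by simp) (by simp)

/-- The fixed integrable majorant. -/
noncomputable def Nmaj (C : ℝ) (w : ℝ × ℝ) : ℝ :=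
  (C * Real.exp (Real.pi/2) * pfun w.1) * pfun w.2
  + (C * Real.exp (-(Real.pi/2) * |w.1|)) * rind w.2

lemma Nmaj_nonneg (C : ℝ) (hC : 0 ≤ C) (w : ℝ × ℝ) : 0 ≤ Nmaj C w := by
  apply add_nonneg
  · exact mul_nonneg (mul_nonneg (mul_nonneg hC (Real.exp_nonneg _)) (pfun_nonneg _)) (pfun_nonneg _)
  · exact mul_nonneg (mul_nonneg hC (Real.exp_nonneg _)) (rind_nonneg _)

lemma Nmaj_integrable (C : ℝ) : Integrable (Nmaj C) := by
  have h1 : Integrable (fun w : ℝ × ℝ => (C * Real.exp (Real.pi/2) * pfun w.1) * pfun w.2)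
      (volume.prod volume) :=
    (pfun_integrable.const_mul (C * Real.exp (Real.pi/2))).mul_prod pfun_integrable
  have h2 : Integrable (fun w : ℝ × ℝ => (C * Real.exp (-(Real.pi/2) * |w.1|)) * rind w.2)
      (volume.prod volume) :=
    (exp_abs_integrable.const_mul C).mul_prod rind_integrable
  have := h1.add h2
  rw [← Measure.volume_eq_prod] at this
  exact this

/-- The key pointwise bound. -/
lemma key_bound (C : ℝ) (hC : 0 < C) (x' y' : ℝ) (hy : y' ∈ Set.Icc (0:ℝ) (1/2))
    (zx zy : ℝ) (hzy : zy ∈ Set.Icc (0:ℝ) 1) (h1 : zx ≠ x') (h2 : zy ≠ y') :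
    (if enr (zx - x', zy - y') ≤ 1 then
        C * (y' / enr (zx - x', zy - y')) * Real.exp (-(Real.pi/2) * (zx - x'))
      else 0)
    + (if 1 ≤ enr (zx - x', zy - y') then
        C * zy ^ 2 * y' * Real.exp (-Real.pi * |zx - x'|) *
          Real.exp (-(Real.pi/2) * (zx - x'))
      else 0)
    ≤ y' * Nmaj C (zx - x', zy - y') := by
  obtain ⟨hy0, hy2⟩ := hy
  set u := zx - x' with hu_def
  set v := zy - y' with hv_def
  have hu : u ≠ 0 := sub_ne_zero.2 h1
  have hv : v ≠ 0 := sub_ne_zero.2 h2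
  have henr : enr (u, v) = Real.sqrt (u ^ 2 + v ^ 2) := rfl
  have habsu : |u| ≤ enr (u, v) := by
    rw [henr, ← Real.sqrt_sq_eq_abs]
    exact Real.sqrt_le_sqrt (by nlinarith [sq_nonneg v])
  have habsv : |v| ≤ enr (u, v) := by
    rw [henr, ← Real.sqrt_sq_eq_abs]
    exact Real.sqrt_le_sqrt (by nlinarith [sq_nonneg u])
  have hvmem : v ∈ Set.Icc (-1:ℝ) 1 := by
    constructor <;> [skip; skip] <;>
      · simp only [hv_def]; obtain ⟨h01, h02⟩ := hzy; linarith
  have hrv : rind v = 1 := Set.indicator_of_mem hvmem _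
  have term1 :
      (if enr (u, v) ≤ 1 then C * (y' / enr (u, v)) * Real.exp (-(Real.pi/2) * u) else 0)
      ≤ y' * ((C * Real.exp (Real.pi/2) * pfun u) * pfun v) := by
    split_ifs with hle
    · have humem : u ∈ Set.Icc (-1:ℝ) 1 := abs_le.1 (habsu.trans hle)
      have hvmem' : v ∈ Set.Icc (-1:ℝ) 1 := abs_le.1 (habsv.trans hle)
      have hpu : pfun u = |u| ^ (-(1/2) : ℝ) := Set.indicator_of_mem humem _
      have hpv : pfun v = |v| ^ (-(1/2) : ℝ) := Set.indicator_of_mem hvmem' _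
      have hsu : 0 < Real.sqrt |u| := Real.sqrt_pos.2 (abs_pos.2 hu)
      have hsv : 0 < Real.sqrt |v| := Real.sqrt_pos.2 (abs_pos.2 hv)
      have hee : Real.sqrt |u| * Real.sqrt |v| ≤ enr (u, v) := by
        rw [← Real.sqrt_mul (abs_nonneg u), henr]
        apply Real.sqrt_le_sqrt
        nlinarith [sq_abs u, sq_abs v, sq_nonneg (|u| - |v|)]
      have hinv : (enr (u, v))⁻¹ ≤ (Real.sqrt |u| * Real.sqrt |v|)⁻¹ :=
        inv_anti₀ (mul_pos hsu hsv) hee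
      have hpu' : |u| ^ (-(1/2) : ℝ) = (Real.sqrt |u|)⁻¹ := by
        rw [Real.rpow_neg (abs_nonneg u), ← Real.sqrt_eq_rpow]
      have hpv' : |v| ^ (-(1/2) : ℝ) = (Real.sqrt |v|)⁻¹ := by
        rw [Real.rpow_neg (abs_nonneg v), ← Real.sqrt_eq_rpow]
      have hdiv : y' / enr (u, v) ≤ y' * (pfun u * pfun v) := by
        rw [div_eq_mul_inv, hpu, hpv, hpu', hpv', ← mul_inv]
        exact mul_le_mul_of_nonneg_left hinv hy0
      have hexp : Real.exp (-(Real.pi/2) * u) ≤ Real.exp (Real.pi/2) := by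
        apply Real.exp_le_exp.2
        have h1 : -u ≤ |u| := neg_le_abs u
        have h2 : |u| ≤ 1 := habsu.trans hle
        nlinarith [Real.pi_pos]
      calc C * (y' / enr (u, v)) * Real.exp (-(Real.pi/2) * u)
          ≤ C * (y' * (pfun u * pfun v)) * Real.exp (Real.pi/2) := by
            apply mul_le_mul
            · exact mul_le_mul_of_nonneg_left hdiv hC.le
            · exact hexp
            · exact Real.exp_nonneg _
            · exact mul_nonneg hC.le
                (mul_nonneg hy0 (mul_nonneg (pfun_nonneg _) (pfun_nonneg _)))
        _ = y' * ((C * Real.exp (Real.pi/2) * pfun u) * pfun v) := by ring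
    · exact mul_nonneg hy0 (mul_nonneg (mul_nonneg (mul_nonneg hC.le (Real.exp_nonneg _))
        (pfun_nonneg _)) (pfun_nonneg _))
  have term2 :
      (if 1 ≤ enr (u, v) then
        C * zy ^ 2 * y' * Real.exp (-Real.pi * |u|) * Real.exp (-(Real.pi/2) * u) else 0)
      ≤ y' * ((C * Real.exp (-(Real.pi/2) * |u|)) * rind v) := by
    rw [hrv, mul_one]
    split_ifs with hle
    · have hz1 : zy ^ 2 ≤ 1 := by nlinarith [hzy.1, hzy.2]
      have hexp : Real.exp (-Real.pi * |u|) * Real.exp (-(Real.pi/2) * u)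
          ≤ Real.exp (-(Real.pi/2) * |u|) := by
        rw [← Real.exp_add]
        apply Real.exp_le_exp.2
        nlinarith [Real.pi_pos, neg_abs_le u]
      calc C * zy ^ 2 * y' * Real.exp (-Real.pi * |u|) * Real.exp (-(Real.pi/2) * u)
          = (C * y') * (zy ^ 2 * (Real.exp (-Real.pi * |u|) * Real.exp (-(Real.pi/2) * u))) := by
            ring
        _ ≤ (C * y') * (1 * Real.exp (-(Real.pi/2) * |u|)) := by
            apply mul_le_mul_of_nonneg_left _ (mul_nonneg hC.le hy0)
            apply mul_le_mul hz1 hexp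
              (mul_nonneg (Real.exp_nonneg _) (Real.exp_nonneg _)) zero_le_one
        _ = y' * (C * Real.exp (-(Real.pi/2) * |u|)) := by ring
    · exact mul_nonneg hy0 (mul_nonneg hC.le (Real.exp_nonneg _))
  have := add_le_add term1 term2
  calc _ ≤ y' * ((C * Real.exp (Real.pi/2) * pfun u) * pfun v)
        + y' * ((C * Real.exp (-(Real.pi/2) * |u|)) * rind v) := this
    _ = y' * Nmaj C (u, v) := by rw [Nmaj]; ring

theorem stmt9 (C : ℝ) (hC : 0 < C) :
    ∃ C' : ℝ, 0 < C' ∧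
      ∀ x' y' : ℝ, y' ∈ Set.Icc (0:ℝ) (1/2) →
        (∫ z in channel,
          ((if enr (z - (x', y')) ≤ 1 then
              C * (y' / enr (z - (x', y'))) * Real.exp (-(Real.pi/2) * (z.1 - x'))
            else 0)
          + (if 1 ≤ enr (z - (x', y')) then
              C * z.2 ^ 2 * y' * Real.exp (-Real.pi * |z.1 - x'|) *
                Real.exp (-(Real.pi/2) * (z.1 - x'))
            else 0)))
        ≤ C' * y' := by
  refine ⟨max (∫ w, Nmaj C w) 1, lt_of_lt_of_le one_pos (le_max_right _ _), ?_⟩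
  intro x' y' hy
  have hN := Nmaj_integrable C
  have hNs : Integrable (fun z : ℝ × ℝ => Nmaj C (z - (x', y'))) := hN.comp_sub_right _
  have hline1 : ∀ᵐ z : ℝ × ℝ, z.1 ≠ x' := by
    rw [ae_iff]
    have : {z : ℝ × ℝ | ¬ z.1 ≠ x'} = ({x'} : Set ℝ) ×ˢ (Set.univ : Set ℝ) := by
      ext z; simp [Set.mem_prod, Prod.ext_iff, eq_comm]
    rw [this, Measure.volume_eq_prod, Measure.prod_prod]
    simp
  have hline2 : ∀ᵐ z : ℝ × ℝ, z.2 ≠ y' := by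
    rw [ae_iff]
    have : {z : ℝ × ℝ | ¬ z.2 ≠ y'} = (Set.univ : Set ℝ) ×ˢ ({y'} : Set ℝ) := by
      ext z; simp [Set.mem_prod, Prod.ext_iff, eq_comm]
    rw [this, Measure.volume_eq_prod, Measure.prod_prod]
    simp
  have hsub : ∀ z : ℝ × ℝ, z - (x', y') = (z.1 - x', z.2 - y') := fun z => rfl
  calc (∫ z in channel,
          ((if enr (z - (x', y')) ≤ 1 then
              C * (y' / enr (z - (x', y'))) * Real.exp (-(Real.pi/2) * (z.1 - x'))
            else 0)
          + (if 1 ≤ enr (z - (x', y')) then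
              C * z.2 ^ 2 * y' * Real.exp (-Real.pi * |z.1 - x'|) *
                Real.exp (-(Real.pi/2) * (z.1 - x'))
            else 0)))
      ≤ ∫ z in channel, y' * Nmaj C (z - (x', y')) := by
        apply integral_mono_of_nonneg
        · refine Filter.Eventually.of_forall fun z => ?_
          apply add_nonneg
          · split_ifs with h
            · exact mul_nonneg (mul_nonneg hC.le (div_nonneg hy.1 (enr_nonneg _)))
                (Real.exp_nonneg _)
            · exact le_refl 0
          · split_ifs with h
            · exact mul_nonneg (mul_nonneg (mul_nonneg (mul_nonneg hC.le (sq_nonneg _))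
                hy.1) (Real.exp_nonneg _)) (Real.exp_nonneg _)
            · exact le_refl 0
        · exact (hNs.const_mul y').integrableOn
        · filter_upwards [ae_restrict_mem channel_measurable,
            ae_restrict_of_ae hline1, ae_restrict_of_ae hline2] with z hz h1 h2
          have hzy : z.2 ∈ Set.Icc (0:ℝ) 1 := hz.2
          have := key_bound C hC x' y' hy z.1 z.2 hzy h1 h2
          rw [hsub z]
          exact this
    _ = y' * ∫ z in channel, Nmaj C (z - (x', y')) := integral_const_mul _ _
    _ ≤ y' * ∫ z, Nmaj C (z - (x', y')) := by
        apply mul_le_mul_of_nonneg_left _ hy.1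
        exact setIntegral_le_integral hNs
          (Filter.Eventually.of_forall fun z => Nmaj_nonneg C hC.le _)
    _ = y' * ∫ w, Nmaj C w := by
        rw [integral_sub_right_eq_self (Nmaj C) ((x', y') : ℝ × ℝ)]
    _ ≤ y' * max (∫ w, Nmaj C w) 1 :=
        mul_le_mul_of_nonneg_left (le_max_left _ _) hy.1
    _ = max (∫ w, Nmaj C w) 1 * y' := mul_comm _ _
end

section
/- Suppose Φ̄ : Ω × [0,∞) → ℝ is bounded, t ↦ Φ̄(z,t) is differentiable for each z, and there exist ε ∈ (0,1) and a constant c > 0 such that at every point (z,t) where Φ̄(z,t) ≥ (1-ε)·sup_{z'} |Φ̄(z',t)| > 0 one has ∂_t Φ̄(z,t) ≤ -c·sup_{z'}|Φ̄(z',t)|, and symmetrically at every point where Φ̄(z,t) ≤ -(1-ε)·sup_{z'}|Φ̄(z',t)| one has ∂_t Φ̄(z,t) ≥ c·sup_{z'}|Φ̄(z',t)|. Assume further that t ↦ M(t) := sup_z |Φ̄(z,t)| is Lipschitz. Then M(t) ≤ M(0) for all t ≥ 0. -/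
/-- First-crossing / maximum principle helper: if `f' ≤ -δ` wherever `f ≥ L` on `[a,b]`,
then `f b ≤ max L (f a - δ (b - a))`. -/
lemma decay_aux (f f' : ℝ → ℝ) (hf : ∀ u, HasDerivAt f (f' u) u)
    (a b L δ : ℝ) (hab : a ≤ b) (hδ : 0 ≤ δ)
    (hd : ∀ u ∈ Set.Icc a b, L ≤ f u → f' u ≤ -δ) :
    f b ≤ max L (f a - δ * (b - a)) := by
  by_contra hcon
  push_neg at hcon
  rw [max_lt_iff] at hcon
  obtain ⟨hL, hfa⟩ := hcon
  have hcont : Continuous f := by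
    rw [continuous_iff_continuousAt]; exact fun u => (hf u).continuousAt
  set g : ℝ → ℝ := fun u => f u + δ * u with hg_def
  have hg : ∀ u, HasDerivAt g (f' u + δ) u := fun u => by
    have h := (hf u).add ((hasDerivAt_id u).const_mul δ)
    rw [mul_one] at h
    exact h
  have hgc : Continuous g := hcont.add (continuous_const.mul continuous_id)
  have key : ∀ s t : ℝ, a ≤ s → t ≤ b → s ≤ t →
      (∀ u ∈ Set.Ioo s t, L ≤ f u) → g t ≤ g s := by
    intro s t hs ht hst hLf
    have hanti : AntitoneOn g (Set.Icc s t) := by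
      refine antitoneOn_of_deriv_nonpos (convex_Icc s t) hgc.continuousOn
        (fun u _ => ((hg u).differentiableAt).differentiableWithinAt) (fun u hu => ?_)
      rw [interior_Icc] at hu
      rw [(hg u).deriv]
      have h1 : f' u ≤ -δ :=
        hd u ⟨le_trans hs hu.1.le, le_trans hu.2.le ht⟩ (hLf u hu)
      linarith
    exact hanti ⟨le_refl s, hst⟩ ⟨hst, le_refl t⟩ hst
  by_cases hS : ∃ u ∈ Set.Icc a b, f u ≤ L
  · set S : Set ℝ := Set.Icc a b ∩ {u | f u ≤ L} with hS_def
    have hSne : S.Nonempty := by obtain ⟨u, hu1, hu2⟩ := hS; exact ⟨u, hu1, hu2⟩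
    have hSbdd : BddAbove S := ⟨b, fun u hu => hu.1.2⟩
    have hScl : IsClosed S := isClosed_Icc.inter (isClosed_le hcont continuous_const)
    set t₁ := sSup S with ht₁
    have ht₁S : t₁ ∈ S := hScl.csSup_mem hSne hSbdd
    have ht₁b : t₁ ≤ b := ht₁S.1.2
    have ht₁a : a ≤ t₁ := ht₁S.1.1
    have hmid : ∀ u ∈ Set.Ioo t₁ b, L ≤ f u := by
      intro u hu
      by_contra hfu
      push_neg at hfu
      have : u ∈ S := ⟨⟨le_trans ht₁a hu.1.le, hu.2.le⟩, hfu.le⟩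
      exact absurd (le_csSup hSbdd this) (not_le.mpr hu.1)
    have := key t₁ b ht₁a le_rfl ht₁b hmid
    simp only [hg_def] at this
    have hft₁ : f t₁ ≤ L := ht₁S.2
    nlinarith
  · push_neg at hS
    have := key a b le_rfl le_rfl hab (fun u hu => (hS u ⟨hu.1.le, hu.2.le⟩).le)
    simp only [hg_def] at this
    nlinarith

theorem stmt18 {Ω : Type*} [Nonempty Ω]
    (Φ : Ω → ℝ → ℝ) (dΦ : Ω → ℝ → ℝ) (M : ℝ → ℝ)
    (B : ℝ) (hbound : ∀ z t, |Φ z t| ≤ B)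
    (hdiff : ∀ z t, HasDerivAt (Φ z) (dΦ z t) t)
    (hMdef : ∀ t, M t = ⨆ z, |Φ z t|)
    (ε c : ℝ) (hε0 : 0 < ε) (hε1 : ε < 1) (hc : 0 < c)
    (hpos : ∀ z t, 0 ≤ t → 0 < M t → (1 - ε) * M t ≤ Φ z t → dΦ z t ≤ -c * M t)
    (hneg : ∀ z t, 0 ≤ t → 0 < M t → Φ z t ≤ -((1 - ε) * M t) → c * M t ≤ dΦ z t)
    (K : NNReal) (hLip : LipschitzWith K M) :
    ∀ t : ℝ, 0 ≤ t → M t ≤ M 0 := by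
  intro T hT
  by_contra hcon
  push_neg at hcon
  have hbdd : ∀ t, BddAbove (Set.range fun z => |Φ z t|) :=
    fun t => ⟨B, by rintro x ⟨z, rfl⟩; exact hbound z t⟩
  have hΦle : ∀ z t, |Φ z t| ≤ M t := fun z t => by
    rw [hMdef]; exact le_ciSup (hbdd t) z
  have hMnn : ∀ t, 0 ≤ M t :=
    fun t => le_trans (abs_nonneg _) (hΦle (Classical.arbitrary Ω) t)
  obtain ⟨t₀, ht₀mem, ht₀max⟩ :=
    isCompact_Icc.exists_isMaxOn (Set.nonempty_Icc.mpr hT) hLip.continuous.continuousOn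
  set S := M t₀ with hSdef
  have hTS : M T ≤ S := ht₀max (Set.mem_Icc.mpr ⟨hT, le_rfl⟩)
  have hM0S : M 0 < S := lt_of_lt_of_le hcon hTS
  have hS0 : 0 < S := lt_of_le_of_lt (hMnn 0) hM0S
  have ht₀0 : 0 ≤ t₀ := ht₀mem.1
  have ht₀T : t₀ ≤ T := ht₀mem.2
  have ht₀pos : 0 < t₀ := by
    rcases lt_or_eq_of_le ht₀0 with h | h
    · exact h
    · exfalso; rw [← h] at hSdef; rw [← hSdef] at hM0S; exact lt_irrefl _ hM0S
  have hK0 : (0:ℝ) ≤ (K:ℝ) := K.coe_nonneg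
  set η := min t₀ (S / (2 * (K:ℝ) + 2)) with hηdef
  have hη0 : 0 < η := lt_min ht₀pos (div_pos hS0 (by linarith))
  have hηt : η ≤ t₀ := min_le_left _ _
  have hη2 : η * (2 * (K:ℝ) + 2) ≤ S := by
    have := min_le_right t₀ (S / (2 * (K:ℝ) + 2))
    rw [hηdef]
    calc min t₀ (S / (2 * (K:ℝ) + 2)) * (2 * (K:ℝ) + 2)
        ≤ S / (2 * (K:ℝ) + 2) * (2 * (K:ℝ) + 2) := by
          apply mul_le_mul_of_nonneg_right this (by linarith)
      _ = S := div_mul_cancel₀ _ (by linarith)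
  have hKη : (K:ℝ) * η ≤ S / 2 := by nlinarith
  -- basic interval facts
  have hint : ∀ u ∈ Set.Icc (t₀ - η) t₀, 0 ≤ u ∧ S / 2 ≤ M u ∧ M u ≤ S := by
    intro u hu
    have hu0 : 0 ≤ u := by
      have := hu.1; linarith
    have huT : u ∈ Set.Icc (0:ℝ) T := ⟨hu0, le_trans hu.2 ht₀T⟩
    refine ⟨hu0, ?_, ht₀max huT⟩
    have hdist : |M t₀ - M u| ≤ (K:ℝ) * |t₀ - u| := by
      have := hLip.dist_le_mul t₀ u
      rwa [Real.dist_eq, Real.dist_eq] at this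
    have habs : |t₀ - u| ≤ η := by
      rw [abs_of_nonneg (by linarith [hu.2])]
      linarith [hu.1]
    have h1 : M t₀ - M u ≤ (K:ℝ) * η := by
      calc M t₀ - M u ≤ |M t₀ - M u| := le_abs_self _
        _ ≤ (K:ℝ) * |t₀ - u| := hdist
        _ ≤ (K:ℝ) * η := mul_le_mul_of_nonneg_left habs hK0
    have : S - M u ≤ S / 2 := by rw [hSdef]; linarith
    linarith
  set δ := c * (S / 2) with hδdef
  have hδ0 : 0 < δ := mul_pos hc (by linarith)
  set L := (1 - ε) * S with hLdef
  set θ := min (δ * η / 2) (ε * S / 2) with hθdef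
  have hθ0 : 0 < θ := lt_min (by positivity) (by positivity)
  have hθ1 : θ ≤ δ * η / 2 := min_le_left _ _
  have hθ2 : θ ≤ ε * S / 2 := min_le_right _ _
  -- the key bound for any function satisfying the drift condition
  have main : ∀ f f' : ℝ → ℝ, (∀ u, HasDerivAt f (f' u) u) → (∀ u, f u ≤ M u) →
      (∀ u, 0 ≤ u → 0 < M u → (1 - ε) * M u ≤ f u → f' u ≤ -(c * M u)) →
      f t₀ ≤ S - θ := by
    intro f f' hf hfM hdrift
    have hd : ∀ u ∈ Set.Icc (t₀ - η) t₀, L ≤ f u → f' u ≤ -δ := by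
      intro u hu hLf
      obtain ⟨hu0, hMlo, hMhi⟩ := hint u hu
      have hMu0 : 0 < M u := by linarith
      have h1 : (1 - ε) * M u ≤ f u := by
        have : (1 - ε) * M u ≤ (1 - ε) * S :=
          mul_le_mul_of_nonneg_left hMhi (by linarith)
        rw [hLdef] at hLf; linarith
      have := hdrift u hu0 hMu0 h1
      have h2 : c * (S / 2) ≤ c * M u := mul_le_mul_of_nonneg_left hMlo hc.le
      rw [hδdef]; linarith
    have := decay_aux f f' hf (t₀ - η) t₀ L δ (by linarith) hδ0.le hd
    rcases max_cases L (f (t₀ - η) - δ * (t₀ - (t₀ - η))) with ⟨heq, _⟩ | ⟨heq, _⟩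
    · rw [heq] at this
      rw [hLdef] at this
      nlinarith
    · rw [heq] at this
      have hfa : f (t₀ - η) ≤ S := le_trans (hfM _) (hint _ ⟨le_rfl, by linarith⟩).2.2
      have : f t₀ ≤ S - δ * η := by
        have harith : t₀ - (t₀ - η) = η := by ring
        rw [harith] at this
        linarith
      nlinarith
  -- pick a near-maximizer
  have hlt : S - θ < ⨆ z, |Φ z t₀| := by rw [← hMdef]; linarith
  obtain ⟨z, hz⟩ := exists_lt_of_lt_ciSup hlt
  rcases lt_abs.mp hz with hzpos | hzneg
  · have := main (Φ z) (dΦ z) (hdiff z)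
      (fun u => le_trans (le_abs_self _) (hΦle z u))
      (fun u hu0 hMu hle => by
        have := hpos z u hu0 hMu hle; linarith)
    linarith
  · have := main (fun u => -Φ z u) (fun u => -dΦ z u)
      (fun u => (hdiff z u).neg)
      (fun u => le_trans (neg_le_abs _) (hΦle z u))
      (fun u hu0 hMu hle => by
        have h1 : Φ z u ≤ -((1 - ε) * M u) := by linarith
        have := hneg z u hu0 hMu h1; simp; linarith)
    linarith
end
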